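/- arXiv:1310.6648 — 2 statements merged into one kernel-verified Lean document; each statement's English description precedes it below -/
import Mathlib

section
/- Let n be a positive integer with n ≡ 2 (mod 6) or n ≡ 4 (mod 6). Then the cokernel group G_n is isomorphic to ℤ/3ℤ. -/
open Matrix

/-- The adjacency matrix of the Cayley graph `C_n` of `ℤ/nℤ` with respect to `{1, n-1}`. -/
def cayleyAdj (n : ℕ) : Matrix (ZMod n) (ZMod n) ℤ :=
  Matrix.of fun i j => (if j = i + 1 then 1 else 0) + (if j = i - 1 then 1 else 0)

/-- The matrix `B_n = I - A_nᵀ`. -/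
def cayleyB (n : ℕ) : Matrix (ZMod n) (ZMod n) ℤ :=
  1 - (cayleyAdj n)ᵀ

/-- The image of `B_n`, viewed as a linear map by matrix-vector multiplication. -/
def imB (n : ℕ) [NeZero n] : Submodule ℤ (ZMod n → ℤ) :=
  LinearMap.range (cayleyB n).mulVecLin

/-- The cokernel group `G_n = (ZMod n → ℤ) ⧸ Im(B_n)`. -/
abbrev cayleyCoker (n : ℕ) [NeZero n] : Type :=
  (ZMod n → ℤ) ⧸ imB n

/-- The class `[e_i]` of the standard basis vector `e_i` in `G_n`. -/
def eClass (n : ℕ) [NeZero n] (i : ZMod n) : cayleyCoker n :=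
  Submodule.Quotient.mk (Pi.single i 1)

/-! ### Auxiliary material -/

/-- The `j`-th column of `B_n`. -/
lemma cayleyB_col (n : ℕ) [NeZero n] (j : ZMod n) :
    (cayleyB n)ᵀ j =
      Pi.single j 1 - Pi.single (j + 1) 1 - Pi.single (j - 1) 1 := by
  funext i
  simp only [transpose_apply, cayleyB, cayleyAdj, Matrix.sub_apply, Matrix.one_apply,
    Matrix.transpose_apply, Matrix.of_apply, Pi.sub_apply, Pi.single_apply]
  ring

lemma col_mem_imB (n : ℕ) [NeZero n] (j : ZMod n) :
    (Pi.single j 1 - Pi.single (j + 1) 1 - Pi.single (j - 1) 1 : ZMod n → ℤ) ∈ imB n := by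
  refine ⟨Pi.single j 1, ?_⟩
  rw [Matrix.mulVecLin_apply, Matrix.mulVec_single, ← cayleyB_col]
  funext i
  simp [Matrix.transpose_apply]

/-- The basic relation in the cokernel. -/
lemma eClass_rec (n : ℕ) [NeZero n] (j : ZMod n) :
    eClass n (j + 1) = eClass n j - eClass n (j - 1) := by
  have h0 : eClass n j - eClass n (j + 1) - eClass n (j - 1) = 0 := by
    have := (Submodule.Quotient.mk_eq_zero (imB n)).mpr (col_mem_imB n j)
    simpa [eClass, Submodule.Quotient.mk_sub] using this
  have h1 : eClass n j = eClass n (j + 1) + eClass n (j - 1) := by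
    rw [sub_sub, sub_eq_zero] at h0
    exact h0
  rw [h1]; abel

/-- The invariant `φ(x) = ∑ i (-1)^i x_i mod 3`. -/
def cokerPhi (n : ℕ) [NeZero n] : (ZMod n → ℤ) →ₗ[ℤ] ZMod 3 where
  toFun x := ∑ i : ZMod n, ((x i : ZMod 3) * (-1) ^ i.val)
  map_add' x y := by
    simp [add_mul, Finset.sum_add_distrib]
  map_smul' r x := by
    simp only [Pi.smul_apply, smul_eq_mul, Int.cast_mul, RingHom.id_apply, zsmul_eq_mul,
      Finset.mul_sum, mul_assoc]

lemma cokerPhi_single (n : ℕ) [NeZero n] (a : ZMod n) :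
    cokerPhi n (Pi.single a 1) = (-1) ^ a.val := by
  simp only [cokerPhi, LinearMap.coe_mk, AddHom.coe_mk, Pi.single_apply]
  rw [Finset.sum_eq_single a]
  · simp
  · intro b _ hb
    simp [hb]
  · simp

theorem coker_zmod_three_of_two_or_four_mod_six (n : ℕ) [NeZero n]
    (h : n % 6 = 2 ∨ n % 6 = 4) :
    Nonempty (cayleyCoker n ≃+ ZMod 3) := by
  have hn2 : 2 ≤ n := by omega
  have hfact : Fact (1 < n) := ⟨hn2⟩
  have heven : n % 2 = 0 := by omega
  -- the sequence `E k = [e_k]`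
  set E : ℕ → cayleyCoker n := fun k => eClass n ((k : ℕ) : ZMod n) with hE
  have Erec : ∀ k : ℕ, E (k + 2) = E (k + 1) - E k := by
    intro k
    have h := eClass_rec n ((k : ZMod n) + 1)
    have e2 : ((k : ZMod n) + 1) - 1 = ((k : ℕ) : ZMod n) := by ring
    have e1 : ((k : ZMod n) + 1) + 1 = (((k + 2 : ℕ) : ZMod n)) := by push_cast; ring
    have e3 : ((k : ZMod n) + 1) = (((k + 1 : ℕ) : ZMod n)) := by push_cast; ring
    rw [e2, e1, e3] at h
    exact h
  have E3 : ∀ k : ℕ, E (k + 3) = -E k := by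
    intro k
    have h1 := Erec (k + 1)
    have h2 := Erec k
    have : k + 1 + 2 = k + 3 := by ring
    rw [this, h2] at h1
    rw [h1]; abel
  have E6 : ∀ k : ℕ, E (k + 6) = E k := by
    intro k
    have h1 := E3 (k + 3)
    have h2 := E3 k
    have : k + 3 + 3 = k + 6 := by ring
    rw [this, h2, neg_neg] at h1
    exact h1
  have Emod : ∀ m k : ℕ, E (6 * m + k) = E k := by
    intro m
    induction m with
    | zero => simp
    | succ m ih =>
      intro k
      have : 6 * (m + 1) + k = (6 * m + k) + 6 := by ring
      rw [this, E6, ih]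
  -- wrap-around relations
  have hEn : E n = E 0 := by
    simp only [hE, ZMod.natCast_self, Nat.cast_zero]
  have hEn1 : E (n + 1) = E 1 := by
    simp only [hE]
    norm_num [ZMod.natCast_self]
  have key : E 1 = -E 0 ∧ E 0 + E 0 + E 0 = 0 := by
    rcases h with h | h
    · have d1 : E n = E 2 := by
        rw [congrArg E (show n = 6 * (n / 6) + 2 by omega), Emod]
      have d2 : E (n + 1) = E 3 := by
        rw [congrArg E (show n + 1 = 6 * (n / 6) + 3 by omega), Emod]
      have e2 : E 2 = E 1 - E 0 := by simpa using Erec 0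
      have e3 : E 3 = -E 0 := by simpa using E3 0
      have hb : E 1 = -E 0 := by rw [← hEn1, d2, e3]
      have ha : E 0 = E 1 - E 0 := by rw [← e2, ← d1, hEn]
      constructor
      · exact hb
      · rw [hb] at ha
        -- E 0 = -E 0 - E 0
        have : E 0 + E 0 + E 0 = (E 0 - (-E 0 - E 0)) := by abel
        rw [this, ← ha]; abel
    · have d1 : E n = E 4 := by
        rw [congrArg E (show n = 6 * (n / 6) + 4 by omega), Emod]
      have d2 : E (n + 1) = E 5 := by
        rw [congrArg E (show n + 1 = 6 * (n / 6) + 5 by omega), Emod]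
      have e2 : E 2 = E 1 - E 0 := by simpa using Erec 0
      have e4 : E 4 = -E 1 := by simpa using E3 1
      have e5 : E 5 = -E 2 := by simpa using E3 2
      have ha : E 0 = -E 1 := by rw [← hEn, d1, e4]
      have hb : E 1 = -E 0 := by
        rw [ha]; abel
      refine ⟨hb, ?_⟩
      have h5 : E 1 = -(E 1 - E 0) := by rw [← e2, ← e5, ← d2, hEn1]
      rw [hb] at h5
      -- h5 : -E 0 = -(-E 0 - E 0)
      have : E 0 + E 0 + E 0 = -(-E 0 - E 0) - (-E 0) := by abel
      rw [this, ← h5]; abel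
  obtain ⟨hb, ha⟩ := key
  -- closed form for E
  have Eneg : ∀ k : ℕ, E k = (-1 : ℤ) ^ k • E 0 := by
    intro k
    induction k using Nat.twoStepInduction with
    | zero => simp
    | one => simpa using hb
    | more k ih1 ih2 =>
      rw [Erec k, ih1, ih2]
      have hpow2 : (-1 : ℤ) ^ (k + 2) = (-1 : ℤ) ^ k := by
        rw [pow_succ, pow_succ]; ring
      have hpow1 : (-1 : ℤ) ^ (k + 1) = -((-1 : ℤ) ^ k) := by
        rw [pow_succ]; ring
      rw [hpow2, hpow1]
      set c : ℤ := (-1 : ℤ) ^ k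
      have h3 : c • E 0 + c • E 0 + c • E 0 = 0 := by
        rw [← smul_add, ← smul_add, ha, smul_zero]
      have h4 : c • E 0 + c • E 0 = -(c • E 0) := by
        have := h3
        rw [add_eq_zero_iff_eq_neg] at this
        exact this
      calc (-c) • E 0 - c • E 0 = -(c • E 0 + c • E 0) := by
            rw [neg_smul]; abel
        _ = -(-(c • E 0)) := by rw [h4]
        _ = c • E 0 := neg_neg _
  have eClass_eq : ∀ i : ZMod n, eClass n i = (-1 : ℤ) ^ i.val • E 0 := by
    intro i
    have : eClass n i = E i.val := by
      simp only [hE, ZMod.natCast_rightInverse i]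
    rw [this, Eneg]
  -- `φ` kills the image of `B`
  have chi_flip : ∀ j : ZMod n, ((-1 : ZMod 3)) ^ ((j + 1).val) = -((-1 : ZMod 3)) ^ j.val := by
    intro j
    have hval : (j + 1).val % 2 = (j.val + 1) % 2 := by
      have h1 : (j + 1).val = (j.val + (1 : ZMod n).val) % n := ZMod.val_add j 1
      have h2 : (1 : ZMod n).val = 1 := ZMod.val_one n
      have h3 : j.val < n := ZMod.val_lt j
      rw [h1, h2]
      rcases Nat.lt_or_ge (j.val + 1) n with hlt | hge
      · rw [Nat.mod_eq_of_lt hlt]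
      · have : j.val + 1 = n := by omega
        rw [this, Nat.mod_self]
        omega
    have hp : ∀ k : ℕ, ((-1 : ZMod 3)) ^ k = if k % 2 = 0 then 1 else -1 := by
      intro k
      rcases Nat.even_or_odd k with hk | hk
      · rw [hk.neg_one_pow, if_pos (Nat.even_iff.mp hk)]
      · have h1 : k % 2 = 1 := Nat.odd_iff.mp hk
        rw [hk.neg_one_pow, if_neg (by omega)]
    rw [hp, hp, hval]
    rcases Nat.even_or_odd j.val with hj | hj
    · have h0 : j.val % 2 = 0 := Nat.even_iff.mp hj
      simp [h0, Nat.add_mod]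
    · have h0 : j.val % 2 = 1 := Nat.odd_iff.mp hj
      simp [h0, Nat.add_mod]
  have phi_col : ∀ j : ZMod n,
      cokerPhi n (Pi.single j 1 - Pi.single (j + 1) 1 - Pi.single (j - 1) 1) = 0 := by
    intro j
    rw [map_sub, map_sub, cokerPhi_single, cokerPhi_single, cokerPhi_single]
    have h1 : ((-1 : ZMod 3)) ^ ((j + 1).val) = -((-1 : ZMod 3)) ^ j.val := chi_flip j
    have h2 : ((-1 : ZMod 3)) ^ ((j - 1).val) = -((-1 : ZMod 3)) ^ j.val := by
      have h3 := chi_flip (j - 1)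
      rw [sub_add_cancel] at h3
      linear_combination h3
    rw [h1, h2]
    have : (3 : ZMod 3) * ((-1 : ZMod 3)) ^ j.val = 0 := by
      rw [show (3 : ZMod 3) = 0 from rfl, zero_mul]
    calc ((-1 : ZMod 3)) ^ j.val - -((-1 : ZMod 3)) ^ j.val - -((-1 : ZMod 3)) ^ j.val
        = (3 : ZMod 3) * ((-1 : ZMod 3)) ^ j.val := by ring
      _ = 0 := this
  have hle : imB n ≤ LinearMap.ker (cokerPhi n) := by
    rw [imB, Matrix.range_mulVecLin, Submodule.span_le]
    rintro _ ⟨j, rfl⟩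
    rw [SetLike.mem_coe, LinearMap.mem_ker, show (cayleyB n).col j = (cayleyB n)ᵀ j from rfl, cayleyB_col]
    exact phi_col j
  -- descend to the quotient
  set phiBar : cayleyCoker n →ₗ[ℤ] ZMod 3 := Submodule.liftQ (imB n) (cokerPhi n) hle
    with hphiBar
  -- the inverse map
  have ha3 : (zmultiplesHom (cayleyCoker n) (E 0)) ((3 : ℕ) : ℤ) = 0 := by
    show ((3 : ℕ) : ℤ) • E 0 = 0
    have : ((3 : ℕ) : ℤ) • E 0 = E 0 + E 0 + E 0 := by
      push_cast
      rw [show (3 : ℤ) = 1 + 1 + 1 by norm_num, add_smul, add_smul, one_smul]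
    rw [this, ha]
  set psi : ZMod 3 →+ cayleyCoker n :=
    ZMod.lift 3 ⟨zmultiplesHom (cayleyCoker n) (E 0), ha3⟩ with hpsi
  have psi_cast : ∀ k : ℤ, psi ((k : ℤ) : ZMod 3) = k • E 0 := by
    intro k
    rw [hpsi, ZMod.lift_coe]
    rfl
  -- key computation: `psi (phi x) = [x]`
  have left : ∀ x : ZMod n → ℤ,
      psi (cokerPhi n x) = Submodule.Quotient.mk x := by
    intro x
    have hxsum : x = ∑ i : ZMod n, (x i) • (Pi.single i 1 : ZMod n → ℤ) := by
      funext j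
      rw [Finset.sum_apply]
      simp [Pi.single_apply]
    have hmk : (Submodule.Quotient.mk x : cayleyCoker n)
        = (∑ i : ZMod n, (x i * (-1) ^ i.val : ℤ)) • E 0 := by
      conv_lhs => rw [hxsum]
      rw [← Submodule.mkQ_apply, map_sum]
      rw [Finset.sum_smul]
      refine Finset.sum_congr rfl fun i _ => ?_
      rw [LinearMap.map_smul, Submodule.mkQ_apply]
      have : (Submodule.Quotient.mk (Pi.single i 1) : cayleyCoker n) = eClass n i := rfl
      rw [this, eClass_eq i, smul_smul]
    have hphix : cokerPhi n x = (((∑ i : ZMod n, (x i * (-1) ^ i.val : ℤ)) : ℤ) : ZMod 3) := by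
      show (∑ i : ZMod n, ((x i : ZMod 3) * (-1) ^ i.val)) = _
      push_cast
      rfl
    rw [hphix, psi_cast, hmk]
  refine ⟨{ toFun := phiBar, invFun := psi,
            left_inv := ?_, right_inv := ?_, map_add' := map_add phiBar }⟩
  · intro y
    obtain ⟨x, rfl⟩ := Submodule.Quotient.mk_surjective (imB n) y
    have : phiBar (Submodule.Quotient.mk x) = cokerPhi n x := rfl
    rw [this, left]
  · intro m
    obtain ⟨k, rfl⟩ := ZMod.intCast_surjective m
    rw [psi_cast]
    have : phiBar (k • E 0) = k • phiBar (E 0) := map_zsmul phiBar k (E 0)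
    rw [this]
    have hE0 : phiBar (E 0) = 1 := by
      have : phiBar (E 0) = cokerPhi n (Pi.single ((0 : ℕ) : ZMod n) 1) := rfl
      rw [this, cokerPhi_single]
      simp
    rw [hE0, zsmul_eq_mul, mul_one]
end

section
/- Let n be a positive integer with n ≡ 3 (mod 6). Then the cokernel group G_n is isomorphic to (ℤ/2ℤ) × (ℤ/2ℤ). -/
open Matrix

namespace CokerAux

def g2 : ZMod 3 → ZMod 2 × ZMod 2 := fun c =>
  if c = 0 then (1, 0) else if c = 1 then (0, 1) else (1, 1)

lemma g2_rel (c : ZMod 3) : g2 c - g2 (c + 1) - g2 (c - 1) = 0 := by revert c; decide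

variable (n : ℕ) [NeZero n]

noncomputable def phi (h3 : (3 : ℕ) ∣ n) : (ZMod n → ℤ) →ₗ[ℤ] ZMod 2 × ZMod 2 :=
  (Pi.basisFun ℤ (ZMod n)).constr ℤ fun i => g2 (ZMod.castHom h3 (ZMod 3) i)

lemma phi_single (h3 : (3 : ℕ) ∣ n) (i : ZMod n) :
    phi n h3 (Pi.single i 1) = g2 (ZMod.castHom h3 (ZMod 3) i) := by
  have := (Pi.basisFun ℤ (ZMod n)).constr_basis ℤ
    (fun i => g2 (ZMod.castHom h3 (ZMod 3) i)) i
  rwa [Pi.basisFun_apply] at this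

/-- column `j` of `B`. -/
lemma colB (j : ZMod n) :
    (cayleyB n).mulVecLin (Pi.single j 1) =
      Pi.single j 1 - Pi.single (j + 1) 1 - Pi.single (j - 1) 1 := by
  funext i
  simp only [Matrix.mulVecLin_apply, Matrix.mulVec_single, mul_one, cayleyB, cayleyAdj,
    Matrix.sub_apply, Matrix.one_apply, Matrix.transpose_apply, Matrix.of_apply,
    Pi.sub_apply, Pi.single_apply]
  have h1 : (i = j + 1) ↔ (j = i - 1) := by constructor <;> intro h <;> subst h <;> ring
  have h2 : (i = j - 1) ↔ (j = i + 1) := by constructor <;> intro h <;> subst h <;> ring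
  by_cases e0 : i = j <;> by_cases e1 : i = j + 1 <;> by_cases e2 : i = j - 1 <;>
    simp [Matrix.one_apply, e0, e1, e2, h1.symm, h2.symm, ← h1, ← h2] <;> omega

lemma col_mem (j : ZMod n) :
    Pi.single j 1 - Pi.single (j + 1) 1 - Pi.single (j - 1) 1 ∈ imB n := by
  rw [← colB]; exact ⟨_, rfl⟩

/-- the basic recurrence in the cokernel -/
lemma eClass_rec (j : ZMod n) :
    eClass n (j + 1) = eClass n j - eClass n (j - 1) := by
  have : eClass n j - eClass n (j - 1) =
      Submodule.Quotient.mk ((Pi.single j 1 : ZMod n → ℤ) - Pi.single (j - 1) 1) := by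
    simp [eClass, Submodule.Quotient.mk_sub]
  rw [this, eClass, Submodule.Quotient.eq]
  have := (imB n).neg_mem (col_mem n j)
  convert this using 1
  abel

noncomputable def tbl : ℕ → cayleyCoker n := fun k =>
  if k % 6 = 0 then eClass n 0
  else if k % 6 = 1 then eClass n 1
  else if k % 6 = 2 then eClass n 1 - eClass n 0
  else if k % 6 = 3 then -eClass n 0
  else if k % 6 = 4 then -eClass n 1
  else eClass n 0 - eClass n 1

lemma tbl_step (m : ℕ) : tbl n (m + 2) = tbl n (m + 1) - tbl n m := by
  have h6 : m % 6 < 6 := Nat.mod_lt _ (by norm_num)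
  have e1 : (m + 1) % 6 = (m % 6 + 1) % 6 := by omega
  have e2 : (m + 2) % 6 = (m % 6 + 2) % 6 := by omega
  unfold tbl
  rw [e1, e2]
  interval_cases h : m % 6 <;> norm_num <;> abel

lemma eClass_natCast (k : ℕ) : eClass n ((k : ℕ) : ZMod n) = tbl n k := by
  induction k using Nat.strong_induction_on with
  | _ k ih =>
    match k with
    | 0 => simp [tbl, Nat.cast_zero]
    | 1 => simp [tbl, Nat.cast_one]
    | (m + 2) =>
      have h1 := ih (m + 1) (by omega)
      have h0 := ih m (by omega)
      have c2 : ((m + 2 : ℕ) : ZMod n) = ((m + 1 : ℕ) : ZMod n) + 1 := by push_cast; ring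
      have c1 : ((m + 1 : ℕ) : ZMod n) - 1 = ((m : ℕ) : ZMod n) := by push_cast; ring
      rw [c2, eClass_rec, c1, h1, h0, tbl_step]

lemma imB_le_ker (h3 : (3 : ℕ) ∣ n) : imB n ≤ LinearMap.ker (phi n h3) := by
  rintro _ ⟨w, rfl⟩
  have hcomp : (phi n h3).comp (cayleyB n).mulVecLin = 0 := by
    apply (Pi.basisFun ℤ (ZMod n)).ext
    intro j
    rw [Pi.basisFun_apply]
    simp only [LinearMap.comp_apply, LinearMap.zero_apply]
    rw [colB, map_sub, map_sub, phi_single, phi_single, phi_single]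
    simp only [map_add, map_sub, RingHom.map_one]
    exact g2_rel (ZMod.castHom h3 (ZMod 3) j)
  simp only [LinearMap.mem_ker]
  have := LinearMap.congr_fun hcomp w
  simpa using this

noncomputable def phibar (h3 : (3 : ℕ) ∣ n) : cayleyCoker n →ₗ[ℤ] ZMod 2 × ZMod 2 :=
  (imB n).liftQ (phi n h3) (imB_le_ker n h3)

section modsix
variable (h : n % 6 = 3)
include h

lemma two_x : eClass n 0 + eClass n 0 = 0 := by
  have := eClass_natCast n n
  rw [ZMod.natCast_self] at this
  unfold tbl at this
  rw [h] at this
  norm_num at this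
  rw [eq_neg_iff_add_eq_zero] at this
  exact this

lemma two_y : eClass n 1 + eClass n 1 = 0 := by
  have := eClass_natCast n (n + 1)
  have hc : ((n + 1 : ℕ) : ZMod n) = 1 := by push_cast [ZMod.natCast_self]; ring
  rw [hc] at this
  have h4 : (n + 1) % 6 = 4 := by omega
  unfold tbl at this
  rw [h4] at this
  norm_num at this
  rw [eq_neg_iff_add_eq_zero] at this
  exact this

lemma neg_x : -eClass n 0 = eClass n 0 := by
  rw [neg_eq_iff_add_eq_zero]; exact two_x n h

lemma neg_y : -eClass n 1 = eClass n 1 := by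
  rw [neg_eq_iff_add_eq_zero]; exact two_y n h

noncomputable def psi1 : ZMod 2 →+ cayleyCoker n :=
  ZMod.lift 2 ⟨(zmultiplesHom _) (eClass n 0), by
    simp [zmultiplesHom_apply, two_smul]; exact two_x n h⟩

noncomputable def psi2 : ZMod 2 →+ cayleyCoker n :=
  ZMod.lift 2 ⟨(zmultiplesHom _) (eClass n 1), by
    simp [zmultiplesHom_apply, two_smul]; exact two_y n h⟩

noncomputable def psi : ZMod 2 × ZMod 2 →+ cayleyCoker n :=
  (psi1 n h).coprod (psi2 n h)

lemma psi1_one : psi1 n h 1 = eClass n 0 := by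
  have h1 : (1 : ZMod 2) = ((1 : ℤ) : ZMod 2) := by norm_num
  rw [psi1, h1, ZMod.lift_coe]
  simp

lemma psi2_one : psi2 n h 1 = eClass n 1 := by
  have h1 : (1 : ZMod 2) = ((1 : ℤ) : ZMod 2) := by norm_num
  rw [psi2, h1, ZMod.lift_coe]
  simp

lemma psi10 : psi n h (1, 0) = eClass n 0 := by
  simp [psi, AddMonoidHom.coprod_apply, psi1_one n h]

lemma psi01 : psi n h (0, 1) = eClass n 1 := by
  simp [psi, AddMonoidHom.coprod_apply, psi2_one n h]

lemma psi11 : psi n h (1, 1) = eClass n 0 + eClass n 1 := by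
  simp [psi, AddMonoidHom.coprod_apply, psi1_one n h, psi2_one n h]

lemma psi_g2 (i : ZMod n) (h3 : (3 : ℕ) ∣ n) :
    psi n h (g2 (ZMod.castHom h3 (ZMod 3) i)) = eClass n i := by
  have hv : ((i.val : ℕ) : ZMod n) = i := by
    rw [ZMod.natCast_val, ZMod.cast_id]
  have he := eClass_natCast n i.val
  rw [hv] at he
  have hc : ZMod.castHom h3 (ZMod 3) i = ((i.val : ℕ) : ZMod 3) := by
    rw [ZMod.castHom_apply, ← ZMod.natCast_val]
  have h6 : i.val % 6 < 6 := Nat.mod_lt _ (by norm_num)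
  obtain ⟨r, hr6, hrv⟩ : ∃ r, r < 6 ∧ i.val % 6 = r := ⟨_, h6, rfl⟩
  have hg : ((i.val : ℕ) : ZMod 3) = ((r % 3 : ℕ) : ZMod 3) := by
    rw [← hrv, Nat.mod_mod_of_dvd _ (by norm_num : (3:ℕ) ∣ 6), ZMod.natCast_mod]
  have ht : ∀ z : cayleyCoker n,
      (if r = 0 then eClass n 0
       else if r = 1 then eClass n 1
       else if r = 2 then eClass n 1 - eClass n 0
       else if r = 3 then -eClass n 0
       else if r = 4 then -eClass n 1
       else eClass n 0 - eClass n 1) = z → tbl n i.val = z := by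
    intro z hz
    rw [← hz]
    unfold tbl
    rw [hrv]
  rw [he, hc, hg]
  interval_cases r
  · rw [ht (eClass n 0) (by norm_num)]
    have : g2 (((0 % 3 : ℕ) : ZMod 3)) = (1, 0) := by decide
    rw [this, psi10 n h]
  · rw [ht (eClass n 1) (by norm_num)]
    have : g2 (((1 % 3 : ℕ) : ZMod 3)) = (0, 1) := by decide
    rw [this, psi01 n h]
  · rw [ht (eClass n 1 - eClass n 0) (by norm_num)]
    have : g2 (((2 % 3 : ℕ) : ZMod 3)) = (1, 1) := by decide
    rw [this, psi11 n h, sub_eq_add_neg, neg_x n h]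
    exact add_comm _ _
  · rw [ht (-eClass n 0) (by norm_num)]
    have : g2 (((3 % 3 : ℕ) : ZMod 3)) = (1, 0) := by decide
    rw [this, psi10 n h, neg_x n h]
  · rw [ht (-eClass n 1) (by norm_num)]
    have : g2 (((4 % 3 : ℕ) : ZMod 3)) = (0, 1) := by decide
    rw [this, psi01 n h, neg_y n h]
  · rw [ht (eClass n 0 - eClass n 1) (by norm_num)]
    have : g2 (((5 % 3 : ℕ) : ZMod 3)) = (1, 1) := by decide
    rw [this, psi11 n h, sub_eq_add_neg, neg_y n h]

lemma psi_phi (h3 : (3 : ℕ) ∣ n) (v : ZMod n → ℤ) :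
    psi n h (phi n h3 v) = Submodule.Quotient.mk v := by
  have : ((psi n h).toIntLinearMap.comp (phi n h3)) = (imB n).mkQ := by
    apply (Pi.basisFun ℤ (ZMod n)).ext
    intro i
    rw [Pi.basisFun_apply]
    simp only [LinearMap.comp_apply, AddMonoidHom.coe_toIntLinearMap, Submodule.mkQ_apply]
    rw [phi_single, psi_g2 n h i h3]
    rfl
  have := LinearMap.congr_fun this v
  simpa using this

end modsix

end CokerAux

theorem coker_klein_of_three_mod_six (n : ℕ) [NeZero n]
    (h : n % 6 = 3) :
    Nonempty (cayleyCoker n ≃+ (ZMod 2 × ZMod 2)) := by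
  have h3 : (3 : ℕ) ∣ n := by omega
  set φ := CokerAux.phibar n h3 with hφ
  have hinj : Function.Injective φ := by
    intro a b hab
    obtain ⟨va, rfl⟩ := Submodule.Quotient.mk_surjective _ a
    obtain ⟨vb, rfl⟩ := Submodule.Quotient.mk_surjective _ b
    have ha : φ (Submodule.Quotient.mk va) = CokerAux.phi n h3 va := rfl
    have hb : φ (Submodule.Quotient.mk vb) = CokerAux.phi n h3 vb := rfl
    rw [ha, hb] at hab
    have := congrArg (CokerAux.psi n h) hab
    rwa [CokerAux.psi_phi n h h3, CokerAux.psi_phi n h h3] at this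
  have hsurj : Function.Surjective φ := by
    intro z
    have h0 : CokerAux.phi n h3 (Pi.single (0 : ZMod n) 1) = (1, 0) := by
      rw [CokerAux.phi_single, RingHom.map_zero]
      decide
    have h1 : CokerAux.phi n h3 (Pi.single (1 : ZMod n) 1) = (0, 1) := by
      rw [CokerAux.phi_single, RingHom.map_one]
      decide
    have key : ∀ z : ZMod 2 × ZMod 2, ∃ v : ZMod n → ℤ, CokerAux.phi n h3 v = z := by
      intro z
      have hall : ∀ w : ZMod 2 × ZMod 2, w = (0, 0) ∨ w = (1, 0) ∨ w = (0, 1) ∨ w = (1, 1) := by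
        decide
      rcases hall z with rfl | rfl | rfl | rfl
      · exact ⟨0, by simp; rfl⟩
      · exact ⟨_, h0⟩
      · exact ⟨_, h1⟩
      · exact ⟨Pi.single 0 1 + Pi.single 1 1, by rw [map_add, h0, h1]; rfl⟩
    obtain ⟨v, hv⟩ := key z
    exact ⟨Submodule.Quotient.mk v, hv⟩
  exact ⟨AddEquiv.ofBijective φ.toAddMonoidHom ⟨hinj, hsurj⟩⟩
end
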